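/- Let U be a real Hilbert space, W ⊆ U a closed subspace with orthogonal projection P_W, and M ⊆ U a nonempty subset. Let δ₀ ≥ 0 and μ ≥ 0 be constants such that for every σ ≥ 0, every w ∈ W, and all x, y with P_W x = P_W y = w, infDist(x, M) ≤ σ and infDist(y, M) ≤ σ, one has ‖x − y‖ ≤ δ₀ + 2σμ. Let N ≥ 1, let A_1, …, A_N : W → U satisfy P_W(A_k(w)) = w for all w ∈ W and all k, and let S : U → ℝ satisfy c·infDist(v, M) ≤ S(v) ≤ C·infDist(v, M) for all v ∈ U, with constants 0 < c ≤ C. Then for every u ∈ M, with w := P_W u, and every k* ∈ {1, …, N} minimizing k ↦ S(A_k(w)), one has ‖u − A_{k*}(w)‖ ≤ δ₀ + 2(C/c)·μ · min_{1 ≤ k ≤ N} ‖u − A_k(w)‖. -/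

import Mathlib

/-- General multi-space oracle bound (Proposition 3.1). -/
theorem stmt_0
    {U : Type*} [NormedAddCommGroup U] [InnerProductSpace ℝ U] [CompleteSpace U]
    (W : Submodule ℝ U) [CompleteSpace W]
    (M : Set U) (hM : M.Nonempty)
    (δ₀ μ : ℝ) (hδ₀ : 0 ≤ δ₀) (hμ : 0 ≤ μ)
    (hstab : ∀ σ : ℝ, 0 ≤ σ → ∀ w : W, ∀ x y : U,
      W.orthogonalProjection x = w → W.orthogonalProjection y = w →
      Metric.infDist x M ≤ σ → Metric.infDist y M ≤ σ →
      ‖x - y‖ ≤ δ₀ + 2 * σ * μ)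
    (N : ℕ) (hN : 1 ≤ N)
    (A : Fin N → W → U)
    (hA : ∀ (k : Fin N) (w : W), W.orthogonalProjection (A k w) = w)
    (S : U → ℝ) (c C : ℝ) (hc : 0 < c) (hcC : c ≤ C)
    (hS : ∀ v : U, c * Metric.infDist v M ≤ S v ∧ S v ≤ C * Metric.infDist v M)
    (u : U) (hu : u ∈ M)
    (kstar : Fin N)
    (hkstar : ∀ k : Fin N,
      S (A kstar (W.orthogonalProjection u)) ≤ S (A k (W.orthogonalProjection u))) :
    ‖u - A kstar (W.orthogonalProjection u)‖ ≤
      δ₀ + 2 * (C / c) * μ * ⨅ k : Fin N, ‖u - A k (W.orthogonalProjection u)‖ := by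
  have hNe : Nonempty (Fin N) := ⟨⟨0, hN⟩⟩
  set w : W := W.orthogonalProjection u with hw
  set I : ℝ := ⨅ k : Fin N, ‖u - A k w‖ with hI
  have hIle : ∀ k : Fin N, I ≤ ‖u - A k w‖ := fun k =>
    ciInf_le ⟨0, fun x ⟨k, hk⟩ => hk ▸ norm_nonneg _⟩ k
  have hInn : 0 ≤ I := le_ciInf fun k => norm_nonneg _
  have hC : 0 < C := lt_of_lt_of_le hc hcC
  -- infDist of A kstar w bounded
  have key : ∀ k : Fin N, Metric.infDist (A kstar w) M ≤ (C / c) * ‖u - A k w‖ := by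
    intro k
    have h1 : c * Metric.infDist (A kstar w) M ≤ S (A kstar w) := (hS _).1
    have h2 : S (A kstar w) ≤ S (A k w) := hkstar k
    have h3 : S (A k w) ≤ C * Metric.infDist (A k w) M := (hS _).2
    have h4 : Metric.infDist (A k w) M ≤ dist (A k w) u := Metric.infDist_le_dist_of_mem hu
    have h5 : dist (A k w) u = ‖u - A k w‖ := by
      rw [dist_eq_norm, norm_sub_rev]
    have : c * Metric.infDist (A kstar w) M ≤ C * ‖u - A k w‖ := by
      calc c * Metric.infDist (A kstar w) M ≤ C * Metric.infDist (A k w) M :=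
            le_trans h1 (le_trans h2 h3)
        _ ≤ C * ‖u - A k w‖ := by
            apply mul_le_mul_of_nonneg_left _ hC.le
            rw [← h5]; exact h4
    rw [div_mul_eq_mul_div, le_div_iff₀ hc]
    linarith [this]
  have hdI : Metric.infDist (A kstar w) M ≤ (C / c) * I := by
    have : Metric.infDist (A kstar w) M / (C / c) ≤ I := by
      apply le_ciInf
      intro k
      rw [div_le_iff₀ (div_pos hC hc)]
      have := key k
      linarith [this, mul_comm ((C : ℝ) / c) ‖u - A k w‖]
    have hCc : 0 < C / c := div_pos hC hc
    calc Metric.infDist (A kstar w) M = (Metric.infDist (A kstar w) M / (C/c)) * (C/c) := by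
          field_simp
      _ ≤ I * (C / c) := mul_le_mul_of_nonneg_right this hCc.le
      _ = (C / c) * I := mul_comm _ _
  have hσ : 0 ≤ (C / c) * I := mul_nonneg (div_pos hC hc).le hInn
  have hu0 : Metric.infDist u M ≤ (C / c) * I := by
    have : Metric.infDist u M = 0 := Metric.infDist_zero_of_mem hu
    linarith
  have := hstab ((C / c) * I) hσ w u (A kstar w) hw.symm (hA kstar w) hu0 hdI
  calc ‖u - A kstar w‖ ≤ δ₀ + 2 * ((C / c) * I) * μ := this
    _ = δ₀ + 2 * (C / c) * μ * I := by ring
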